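/- Define f(λ,t) = log((1/(1+t))e^{−λt} + (t/(1+t))e^{λ}) for λ ≥ 0 and t ≥ 0. Then for every λ > 0 and t ≥ 0, the second partial derivative ∂²f/∂t²(λ,t) is strictly negative; in particular, for each fixed λ > 0, t ↦ f(λ,t) is strictly concave on [0,∞). -/

import Mathlib

open Real

lemma key_ineq {x t : ℝ} (hx : 0 < x) (ht : 0 ≤ t) :
    Real.exp (-x) * (x^2*t + 2*x*(1+t) + 2*t) + Real.exp (-x) ^ 2 < 1 + 2*t := by
  have hex : 0 < Real.exp (-x) := Real.exp_pos _
  have hmul : Real.exp (-x) * Real.exp x = 1 := by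
    rw [← Real.exp_add]; simp
  have h1 : x^2 + 2*x + 2 ≤ 2 * Real.exp x := by
    nlinarith [Real.quadratic_le_exp_of_nonneg hx.le]
  have h1' : Real.exp (-x) * (x^2 + 2*x + 2) ≤ 2 := by
    nlinarith [mul_le_mul_of_nonneg_left h1 hex.le]
  have h2 : 2*x < Real.exp x - Real.exp (-x) := by
    have hs : x < Real.sinh x := Real.self_lt_sinh_iff.2 hx
    rw [Real.sinh_eq] at hs; linarith
  have h2' : 2*x*Real.exp (-x) + Real.exp (-x)^2 < 1 := by
    nlinarith [mul_lt_mul_of_pos_left h2 hex]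
  nlinarith [mul_le_mul_of_nonneg_left h1' ht]

theorem f_second_deriv_t_neg (lam : ℝ) (hlam : 0 < lam) :
    (∀ t : ℝ, 0 ≤ t →
      deriv (deriv (fun s : ℝ =>
        Real.log ((1/(1+s)) * Real.exp (-(lam * s)) + (s/(1+s)) * Real.exp lam))) t < 0)
    ∧ StrictConcaveOn ℝ (Set.Ici (0:ℝ)) (fun s : ℝ =>
        Real.log ((1/(1+s)) * Real.exp (-(lam * s)) + (s/(1+s)) * Real.exp lam)) := by
  set f : ℝ → ℝ := fun s : ℝ =>
      Real.log ((1/(1+s)) * Real.exp (-(lam * s)) + (s/(1+s)) * Real.exp lam) with hf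
  set g : ℝ → ℝ := fun s => Real.exp (-(lam*s)) + s * Real.exp lam with hgdef
  set N : ℝ → ℝ := fun s => Real.exp lam - lam * Real.exp (-(lam*s)) with hNdef
  set φ : ℝ → ℝ := fun s => Real.log (g s) - Real.log (1+s) with hφdef
  set φ1 : ℝ → ℝ := fun s => N s / g s - 1/(1+s) with hφ1def
  set φ2 : ℝ → ℝ := fun s =>
      (lam^2 * Real.exp (-(lam*s)) * g s - N s * N s) / (g s)^2 + 1/(1+s)^2 with hφ2def
  set U : Set ℝ := Set.Ioi (-Real.exp (-(2*lam))) with hUdef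
  have hUopen : IsOpen U := isOpen_Ioi
  have hc0 : 0 < Real.exp (-(2*lam)) := Real.exp_pos _
  have hc1 : Real.exp (-(2*lam)) < 1 := Real.exp_lt_one_iff.2 (by linarith)
  have hIciU : Set.Ici (0:ℝ) ⊆ U := fun s hs => by
    have : -Real.exp (-(2*lam)) < s := lt_of_lt_of_le (by simpa using hc0) hs
    exact this
  -- basic positivity on U
  have hs1 : ∀ s ∈ U, 0 < 1 + s := by
    intro s hs
    have : -Real.exp (-(2*lam)) < s := hs
    linarith
  have hgs : ∀ s ∈ U, 0 < g s := by
    intro s hs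
    have hse : -Real.exp (-(2*lam)) < s := hs
    rcases le_or_gt 0 s with h0 | h0
    · have := Real.exp_pos (-(lam*s))
      have : 0 ≤ s * Real.exp lam := mul_nonneg h0 (Real.exp_pos lam).le
      simp only [hgdef]
      nlinarith [Real.exp_pos (-(lam*s))]
    · have h1 : (1:ℝ) ≤ Real.exp (-(lam*s)) := by
        apply Real.one_le_exp
        nlinarith
      have h2 : -Real.exp (-lam) < s * Real.exp lam := by
        have : Real.exp (-(2*lam)) * Real.exp lam = Real.exp (-lam) := by
          rw [← Real.exp_add]; ring_nf
        nlinarith [Real.exp_pos lam]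
      have h3 : Real.exp (-lam) < 1 := Real.exp_lt_one_iff.2 (by linarith)
      simp only [hgdef]
      nlinarith
  -- f = φ on U
  have hfeq : Set.EqOn f φ U := by
    intro s hs
    have h1 : (1:ℝ) + s ≠ 0 := (hs1 s hs).ne'
    have h2 : g s ≠ 0 := (hgs s hs).ne'
    have harg : (1/(1+s)) * Real.exp (-(lam * s)) + (s/(1+s)) * Real.exp lam
        = g s / (1+s) := by
      simp only [hgdef]; field_simp
    simp only [hf, hφdef, harg, Real.log_div h2 h1]
  -- derivatives
  have hgderiv : ∀ t, HasDerivAt g (N t) t := by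
    intro t
    have h1 : HasDerivAt (fun s : ℝ => -(lam*s)) (-lam) t := by
      simpa using ((hasDerivAt_id t).const_mul lam).fun_neg
    have h2 : HasDerivAt (fun s : ℝ => Real.exp (-(lam*s)))
        (Real.exp (-(lam*t)) * (-lam)) t := (Real.hasDerivAt_exp _).comp t h1
    have h3 : HasDerivAt (fun s : ℝ => s * Real.exp lam) (Real.exp lam) t := by
      simpa using (hasDerivAt_id t).mul_const (Real.exp lam)
    have := h2.fun_add h3
    simp only [hgdef, hNdef]
    exact this.congr_deriv (by ring)
  have hNderiv : ∀ t, HasDerivAt N (lam^2 * Real.exp (-(lam*t))) t := by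
    intro t
    have h1 : HasDerivAt (fun s : ℝ => -(lam*s)) (-lam) t := by
      simpa using ((hasDerivAt_id t).const_mul lam).fun_neg
    have h2 : HasDerivAt (fun s : ℝ => Real.exp (-(lam*s)))
        (Real.exp (-(lam*t)) * (-lam)) t := (Real.hasDerivAt_exp _).comp t h1
    have := (h2.const_mul lam).const_sub (Real.exp lam)
    simp only [hNdef]
    exact this.congr_deriv (by ring)
  have h1plus : ∀ t : ℝ, HasDerivAt (fun s : ℝ => 1 + s) 1 t := by
    intro t; simpa using (hasDerivAt_id t).const_add 1
  have hφderiv : ∀ t ∈ U, HasDerivAt φ (φ1 t) t := by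
    intro t ht
    have h1 := (hgderiv t).log (hgs t ht).ne'
    have h2 := (h1plus t).log (hs1 t ht).ne'
    have := h1.fun_sub h2
    simp only [hφdef, hφ1def]
    convert this using 1
  have hφ1deriv : ∀ t ∈ U, HasDerivAt φ1 (φ2 t) t := by
    intro t ht
    have h1 := (hNderiv t).div (hgderiv t) (hgs t ht).ne'
    have h2 := (hasDerivAt_const t (1:ℝ)).div (h1plus t) (hs1 t ht).ne'
    have := h1.fun_sub h2
    simp only [hφ1def, hφ2def]
    exact this.congr_deriv (by ring)
  -- f has derivative φ1 on U
  have hfderiv : ∀ t ∈ U, HasDerivAt f (φ1 t) t := by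
    intro t ht
    exact (hφderiv t ht).congr_of_eventuallyEq
      (hfeq.eventuallyEq_of_mem (hUopen.mem_nhds ht))
  have hderiv1 : ∀ t ∈ U, deriv f t = φ1 t := fun t ht => (hfderiv t ht).deriv
  have hderiv2 : ∀ t ∈ U, deriv (deriv f) t = φ2 t := by
    intro t ht
    have hev : deriv f =ᶠ[nhds t] φ1 :=
      Filter.eventuallyEq_of_mem (hUopen.mem_nhds ht) hderiv1
    rw [hev.deriv_eq]
    exact (hφ1deriv t ht).deriv
  -- negativity of φ2 on Ici 0
  have hφ2neg : ∀ t : ℝ, 0 ≤ t → φ2 t < 0 := by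
    intro t ht0
    have htU : t ∈ U := hIciU ht0
    have hx : 0 < lam * (1+t) := by nlinarith
    have key := key_ineq hx ht0
    have hub : Real.exp (-(lam*(1+t))) * Real.exp lam = Real.exp (-(lam*t)) := by
      rw [← Real.exp_add]; ring_nf
    have hE : (1+t)^2 * (lam^2 * Real.exp (-(lam*t)) * g t - N t * N t) + (g t)^2 < 0 := by
      simp only [hgdef, hNdef]
      rw [← hub]
      nlinarith [mul_lt_mul_of_pos_left key
        (mul_pos (Real.exp_pos lam) (Real.exp_pos lam))]
    have hg2 : (0:ℝ) < (g t)^2 := pow_pos (hgs t htU) 2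
    have ht2 : (0:ℝ) < (1+t)^2 := pow_pos (hs1 t htU) 2
    simp only [hφ2def]
    rw [div_add_div _ _ hg2.ne' ht2.ne']
    apply div_neg_of_neg_of_pos
    · nlinarith
    · positivity
  constructor
  · intro t ht0
    rw [hderiv2 t (hIciU ht0)]
    exact hφ2neg t ht0
  · apply strictConcaveOn_of_deriv2_neg (convex_Ici 0)
    · intro t ht
      exact (hfderiv t (hIciU ht)).differentiableAt.continuousAt.continuousWithinAt
    · intro t ht
      rw [interior_Ici] at ht
      have h2 : deriv^[2] f t = deriv (deriv f) t := by
        simp [Function.iterate_succ_apply']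
      rw [h2, hderiv2 t (hIciU (Set.mem_Ici.2 ht.le))]
      exact hφ2neg t ht.le
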